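/- Let R be a commutative ring, 𝔞 ⊆ R an ideal with 𝔞² = (0), and g, h ∈ 𝔞[X,Y] with ∂g/∂X + ∂h/∂Y = 0, where R is a Q-algebra. Then there exists p ∈ 𝔞[X,Y] with g = ∂p/∂Y and h = -∂p/∂X. -/

import Mathlib

open MvPolynomial

noncomputable section

section Aux

variable {R : Type*} [CommRing R] [Algebra ℚ R]

lemma coeff_pderiv' (i : Fin 2) (f : MvPolynomial (Fin 2) R) (m : Fin 2 →₀ ℕ) :
    coeff m (pderiv i f) = coeff (m + Finsupp.single i 1) f * ((m i : R) + 1) := by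
  conv_lhs => rw [f.as_sum]
  conv_rhs => rw [f.as_sum]
  rw [map_sum, coeff_sum, coeff_sum, Finset.sum_mul]
  refine Finset.sum_congr rfl fun d _ => ?_
  rw [pderiv_monomial, coeff_monomial, coeff_monomial]
  by_cases h0 : d = m + Finsupp.single i 1
  · subst h0
    rw [if_pos (add_tsub_cancel_right m (Finsupp.single i 1)), if_pos rfl]
    simp [mul_comm]
  · rw [if_neg h0, zero_mul]
    split_ifs with h
    · by_cases hdi : d i = 0
      · simp [hdi]
      · exfalso
        apply h0
        rw [← h, tsub_add_cancel_of_le]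
        rwa [Finsupp.single_le_iff, Nat.one_le_iff_ne_zero]
    · rfl

lemma natCast_add_one_isUnit (n : ℕ) : IsUnit ((n : R) + 1) := by
  have : ((n : R) + 1) = algebraMap ℚ R ((n : ℚ) + 1) := by
    push_cast
    rfl
  rw [this]
  exact (isUnit_iff_ne_zero.mpr (by positivity)).map (algebraMap ℚ R)

lemma coeff_eq_zero_of_pderiv_eq_zero {j : Fin 2} {f : MvPolynomial (Fin 2) R}
    (hf : pderiv j f = 0) {m : Fin 2 →₀ ℕ} (hm : m j ≠ 0) : coeff m f = 0 := by
  set m' := m - Finsupp.single j 1 with hm'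
  have hmm : m' + Finsupp.single j 1 = m := by
    rw [hm', tsub_add_cancel_of_le]
    rwa [Finsupp.single_le_iff, Nat.one_le_iff_ne_zero]
  have := coeff_pderiv' j f m'
  rw [hf, coeff_zero, hmm] at this
  exact ((natCast_add_one_isUnit (m' j)).mul_left_eq_zero).mp this.symm

/-- Antiderivative in variable `i`. -/
def antideriv (i : Fin 2) (f : MvPolynomial (Fin 2) R) : MvPolynomial (Fin 2) R :=
  ∑ d ∈ f.support, monomial (d + Finsupp.single i 1) ((((d i : ℚ) + 1))⁻¹ • f.coeff d)

lemma coeff_antideriv_mem {a : Ideal R} {f : MvPolynomial (Fin 2) R}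
    (hf : ∀ d, f.coeff d ∈ a) (i : Fin 2) (m : Fin 2 →₀ ℕ) :
    coeff m (antideriv i f) ∈ a := by
  rw [antideriv, coeff_sum]
  refine Ideal.sum_mem _ fun d _ => ?_
  rw [coeff_monomial]
  split_ifs
  · rw [Algebra.smul_def]
    exact Ideal.mul_mem_left _ _ (hf d)
  · exact a.zero_mem

lemma pderiv_antideriv (i : Fin 2) (f : MvPolynomial (Fin 2) R) :
    pderiv i (antideriv i f) = f := by
  rw [antideriv, map_sum]
  conv_rhs => rw [f.as_sum]
  refine Finset.sum_congr rfl fun d _ => ?_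
  rw [pderiv_monomial, add_tsub_cancel_right]
  congr 1
  simp only [Finsupp.add_apply, Finsupp.single_eq_same]
  have h2 : (((d i : ℕ) + 1 : ℕ) : R) = algebraMap ℚ R ((d i : ℚ) + 1) := by
    push_cast
    rfl
  rw [h2, mul_comm, ← Algebra.smul_def, smul_smul, mul_inv_cancel₀ (by positivity), one_smul]

lemma pderiv_antideriv_other {i j : Fin 2} (hij : j ≠ i) {f : MvPolynomial (Fin 2) R}
    (hf : pderiv j f = 0) : pderiv j (antideriv i f) = 0 := by
  ext m
  rw [coeff_pderiv', coeff_zero]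
  have : coeff (m + Finsupp.single j 1) (antideriv i f) = 0 := by
    rw [antideriv, coeff_sum]
    refine Finset.sum_eq_zero fun d _ => ?_
    rw [coeff_monomial]
    split_ifs with hdm
    · have hdj : d j ≠ 0 := by
        have h2 := congrArg (fun s => s j) hdm
        simp only [Finsupp.add_apply] at h2
        rw [Finsupp.single_eq_same, Finsupp.single_eq_of_ne hij, add_zero] at h2
        omega
      rw [coeff_eq_zero_of_pderiv_eq_zero hf hdj, smul_zero]
    · rfl
  rw [this, zero_mul]

lemma pderiv_comm' (f : MvPolynomial (Fin 2) R) :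
    pderiv (0 : Fin 2) (pderiv 1 f) = pderiv 1 (pderiv 0 f) := by
  ext m
  rw [coeff_pderiv', coeff_pderiv', coeff_pderiv', coeff_pderiv']
  simp only [Finsupp.add_apply, Finsupp.single_apply]
  norm_num
  rw [add_right_comm m (Finsupp.single (1 : Fin 2) 1) (Finsupp.single 0 1)]
  ring

end Aux

/-- Over a `ℚ`-algebra `R`, if `𝔞 ⊆ R` is an ideal with `𝔞² = 0` and `g, h ∈ 𝔞[X,Y]`
satisfy `∂g/∂X + ∂h/∂Y = 0`, then there is `p ∈ 𝔞[X,Y]` with `g = ∂p/∂Y` and `h = -∂p/∂X`.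
Here `X` is the variable `X 0` and `Y` is `X 1`. -/
theorem exists_potential_of_divergence_free
    (R : Type*) [CommRing R] [Algebra ℚ R] (a : Ideal R) (ha : a ^ 2 = ⊥)
    (g h : MvPolynomial (Fin 2) R)
    (hg : ∀ d, g.coeff d ∈ a) (hh : ∀ d, h.coeff d ∈ a)
    (hdiv : pderiv 0 g + pderiv 1 h = 0) :
    ∃ p : MvPolynomial (Fin 2) R, (∀ d, p.coeff d ∈ a) ∧
      pderiv 1 p = g ∧ pderiv 0 p = -h := by
  set p1 := antideriv 1 g with hp1def
  have hp1 : pderiv 1 p1 = g := pderiv_antideriv 1 g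
  set r := h + pderiv 0 p1 with hrdef
  have hr1 : pderiv 1 r = 0 := by
    rw [hrdef, map_add, ← pderiv_comm', hp1, add_comm]
    exact hdiv
  have hrmem : ∀ d, r.coeff d ∈ a := by
    intro d
    rw [hrdef, coeff_add]
    refine a.add_mem (hh d) ?_
    rw [coeff_pderiv']
    exact Ideal.mul_mem_right _ _ (coeff_antideriv_mem hg 1 _)
  refine ⟨p1 - antideriv 0 r, fun d => ?_, ?_, ?_⟩
  · rw [coeff_sub]
    exact a.sub_mem (coeff_antideriv_mem hg 1 d) (coeff_antideriv_mem hrmem 0 d)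
  · rw [map_sub, hp1, pderiv_antideriv_other (by decide) hr1, sub_zero]
  · rw [map_sub, pderiv_antideriv 0 r, hrdef]
    ring

end
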